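/- Let G^{A,B} be a biconed graph, T a spanning tree of G^{A,B}, and e an edge of T. Then e is internally active in T if and only if either e = 00̄, or e is a connecting edge of T whose connecting vertex v satisfies: the component of v in T ∖ T_0 does not contain 0̄, contains no connecting vertex other than v, and v is the smallest vertex of that component with respect to the fixed vertex order. -/

import Mathlib

/-!
Formalization scaffold for "h-vectors of graphic matroids of biconed graphs".

A graph `G` (loops and parallel edges allowed) with vertex set `A ∪ B` is
modelled by an abstract finite edge type `E` with an endpoint map
`ends : E → Sym2 (Fin m ⊕ₗ Fin n)`, where `A = Fin m = {1,…,m}`,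
`Ā = B \ A = Fin n = {1̄,…,n̄}` and the finset `S ⊆ Fin m` records `A ∩ B`
(so `B = S ∪ Ā`).  The biconing `G^{A,B}` adds the two vertices `0` and `0̄`
and the edges `00̄`, `0a (a ∈ A)` and `0̄b (b ∈ B)`.
-/

namespace BiconedPaper

noncomputable section
open scoped Classical

/-! ### Walks in multigraphs presented by an endpoint map -/

/-- A walk in the multigraph with edge set `ε` and endpoint map `ends`. -/
inductive MWalk {ε ν : Type} (ends : ε → Sym2 ν) : ν → ν → Type
  | nil (u : ν) : MWalk ends u u
  | cons {u w : ν} (e : ε) (v : ν) (h : ends e = s(u, v)) (p : MWalk ends v w) :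
      MWalk ends u w

namespace MWalk

variable {ε ν : Type} {ends : ε → Sym2 ν}

/-- The list of edges traversed by a walk. -/
def edges : ∀ {u v : ν}, MWalk ends u v → List ε
  | _, _, nil _ => []
  | _, _, cons e _ _ p => e :: p.edges

/-- The list of vertices visited by a walk. -/
def support : ∀ {u v : ν}, MWalk ends u v → List ν
  | u, _, nil _ => [u]
  | u, _, cons _ _ _ p => u :: p.support

/-- A walk is a path if it visits no vertex twice. -/
def IsPath {u v : ν} (p : MWalk ends u v) : Prop := p.support.Nodup

/-- All edges of the walk belong to the edge set `F`. -/
def edgesIn {u v : ν} (p : MWalk ends u v) (F : Finset ε) : Prop :=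
  ∀ e ∈ p.edges, e ∈ F

/-- The number of "bridging" edges traversed by a walk, i.e. steps whose two
endpoints lie on different sides according to `sideF`. -/
def bridgeCount (sideF : ν → Bool) : ∀ {u v : ν}, MWalk ends u v → ℕ
  | _, _, nil _ => 0
  | u, _, cons _ v' _ p => (if sideF u = sideF v' then 0 else 1) + p.bridgeCount sideF

end MWalk

/-- `u` and `v` are joined by a walk all of whose edges lie in `F`. -/
def Reachable {ε ν : Type} (ends : ε → Sym2 ν) (F : Finset ε) (u v : ν) : Prop :=
  ∃ p : MWalk ends u v, p.edgesIn F

/-- An edge set is acyclic (a forest) iff removing any one of its edges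
disconnects the endpoints of that edge.  (In particular no loops and no
parallel pairs.) -/
def IsAcyclic {ε ν : Type} [DecidableEq ε] (ends : ε → Sym2 ν) (F : Finset ε) : Prop :=
  ∀ e ∈ F, ∀ u v : ν, ends e = s(u, v) → ¬ Reachable ends (F.erase e) u v

/-- A spanning tree: an acyclic edge set connecting every pair of vertices. -/
def IsSpanningTree {ε ν : Type} [DecidableEq ε] (ends : ε → Sym2 ν) (T : Finset ε) : Prop :=
  IsAcyclic ends T ∧ ∀ u v : ν, Reachable ends T u v

/-! ### Biconed graphs -/

/-- The data of a biconed graph `G^{A,B}`:  the graph `G` has vertex set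
`A ∪ B` with `A = Fin m`, `Ā = B \ A = Fin n`, `A ∩ B = S`, and abstract
edge set `E` (so loops and parallel edges are allowed). -/
structure BiconedGraph where
  m : ℕ
  n : ℕ
  E : Type
  fintypeE : Fintype E
  decEqE : DecidableEq E
  ends : E → Sym2 (Fin m ⊕ₗ Fin n)
  S : Finset (Fin m)

namespace BiconedGraph

variable (P : BiconedGraph)

instance : Fintype P.E := P.fintypeE
instance : DecidableEq P.E := P.decEqE

/-- The vertices of `G`, linearly ordered `1 < ⋯ < m < 1̄ < ⋯ < n̄`. -/
abbrev VG := Fin P.m ⊕ₗ Fin P.n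

/-- The vertices of `G^{A,B}_red`:  `⊥` is the vertex `0̄`, ordered
`0̄ < 1 < ⋯ < m < 1̄ < ⋯ < n̄`. -/
abbrev Vred := WithBot P.VG

/-- The vertices of `G^{A,B}`: `⊥` is `0`, ordered `0 < 0̄ < 1 < ⋯ < n̄`. -/
abbrev W := WithBot P.Vred

/-- The vertex `a ∈ A`. -/
def aVert (a : Fin P.m) : P.VG := toLex (Sum.inl a)
/-- The vertex `b ∈ Ā`. -/
def bVert (b : Fin P.n) : P.VG := toLex (Sum.inr b)
/-- Inclusion of the vertices of `G` into those of `G^{A,B}_red`. -/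
def liftV (x : P.VG) : P.Vred := (x : WithBot P.VG)
/-- Inclusion of the vertices of `G^{A,B}_red` into those of `G^{A,B}`. -/
def liftW (x : P.Vred) : P.W := (x : WithBot P.Vred)

/-- The edges of the biconed graph `G^{A,B}`:  the edge `00̄`, the coning
edges `0a (a ∈ A)`, `0̄b (b ∈ Ā)`, `0̄a (a ∈ A ∩ B)`, and the edges of `G`. -/
abbrev EB := Unit ⊕ (Fin P.m ⊕ (Fin P.n ⊕ ({a : Fin P.m // a ∈ P.S} ⊕ P.E)))

/-- The edge `00̄`. -/
abbrev e00 : P.EB := Sum.inl ()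
/-- The coning edge `0a`, `a ∈ A`. -/
abbrev eA (a : Fin P.m) : P.EB := Sum.inr (Sum.inl a)
/-- The coning edge `0̄b`, `b ∈ Ā`. -/
abbrev eB (b : Fin P.n) : P.EB := Sum.inr (Sum.inr (Sum.inl b))
/-- The coning edge `0̄a`, `a ∈ A ∩ B`. -/
abbrev eS (a : {a : Fin P.m // a ∈ P.S}) : P.EB := Sum.inr (Sum.inr (Sum.inr (Sum.inl a)))
/-- An original edge of `G`. -/
abbrev eG (e : P.E) : P.EB := Sum.inr (Sum.inr (Sum.inr (Sum.inr e)))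

/-- The endpoint map of `G^{A,B}`. -/
def endsB : P.EB → Sym2 P.W
  | Sum.inl _ => s((⊥ : P.W), P.liftW ⊥)
  | Sum.inr (Sum.inl a) => s((⊥ : P.W), P.liftW (P.liftV (P.aVert a)))
  | Sum.inr (Sum.inr (Sum.inl b)) => s(P.liftW ⊥, P.liftW (P.liftV (P.bVert b)))
  | Sum.inr (Sum.inr (Sum.inr (Sum.inl a))) => s(P.liftW ⊥, P.liftW (P.liftV (P.aVert a.1)))
  | Sum.inr (Sum.inr (Sum.inr (Sum.inr e))) => (P.ends e).map fun x => P.liftW (P.liftV x)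

/-- The spanning tree `T₀`, consisting of `00̄`, the edges `0a (a ∈ A)` and
the edges `0̄b (b ∈ Ā)`. -/
def T0 : Finset P.EB :=
  Finset.univ.filter fun e => match e with
    | Sum.inl _ => True
    | Sum.inr (Sum.inl _) => True
    | Sum.inr (Sum.inr (Sum.inl _)) => True
    | _ => False

/-- The edges of `G^{A,B}_red` (delete the edges of `T₀` and the vertex `0`):
the edges `0̄a (a ∈ A ∩ B)` together with the edges of `G`. -/
abbrev Ered := {a : Fin P.m // a ∈ P.S} ⊕ P.E

/-- The endpoint map of `G^{A,B}_red`; `⊥` is the vertex `0̄`. -/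
def endsRed : P.Ered → Sym2 P.Vred
  | Sum.inl a => s((⊥ : P.Vred), P.liftV (P.aVert a.1))
  | Sum.inr e => (P.ends e).map P.liftV

/-- Inclusion of the edges of `G^{A,B}_red` into those of `G^{A,B}`. -/
def redToEB : P.Ered → P.EB
  | Sum.inl a => P.eS a
  | Sum.inr e => P.eG e

/-- The edge set `T \ T₀` of `T`, viewed inside `G^{A,B}_red`. -/
def redOf (T : Finset P.EB) : Finset P.Ered :=
  Finset.univ.filter fun e => P.redToEB e ∈ T

/-- `true` on the vertices of `A`, `false` on the vertices of `Ā ∪ {0̄}`. -/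
def side : P.Vred → Bool :=
  WithBot.recBotCoe false fun x => Sum.elim (fun _ => true) (fun _ => false) (ofLex x)

/-- The vertex lies in `A`. -/
def InA (v : P.Vred) : Prop := ∃ a : Fin P.m, v = P.liftV (P.aVert a)

/-- An edge of `G^{A,B}_red` is bridging if it joins a vertex of `A` to a
vertex of `Ā ∪ {0̄}`. -/
def BridgingE (e : P.Ered) : Prop :=
  ∃ u v : P.Vred, P.endsRed e = s(u, v) ∧ P.side u ≠ P.side v

/-! ### 2-edge-rooted forests -/

/-- The underlying edge set `F` of the multiset of edges given by the
multiplicity function `mult` (an edge `e` carries `mult e - 1` edge roots). -/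
def mSupport (mult : P.Ered → ℕ) : Finset P.Ered :=
  Finset.univ.filter fun e => mult e ≠ 0

/-- The degree of the multiset of edges given by `mult`. -/
def deg (mult : P.Ered → ℕ) : ℕ := ∑ e : P.Ered, mult e

/-- Edge `e` meets the connected component of `v` in the edge set `F`. -/
def Touches (F : Finset P.Ered) (v : P.Vred) (e : P.Ered) : Prop :=
  ∃ u : P.Vred, u ∈ P.endsRed e ∧ Reachable P.endsRed F v u

/-- The total number of edge roots in the component of `v`. -/
def compEdgeRoots (mult : P.Ered → ℕ) (v : P.Vred) : ℕ :=
  ∑ e ∈ P.mSupport mult, if P.Touches (P.mSupport mult) v e then mult e - 1 else 0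

/-- The component of `v` is `compCount`-edge-rooted:  the number of its edge
roots, plus `1` if it contains the vertex `0̄`. -/
def compCount (mult : P.Ered → ℕ) (v : P.Vred) : ℕ :=
  P.compEdgeRoots mult v +
    if Reachable P.endsRed (P.mSupport mult) v (⊥ : P.Vred) then 1 else 0

/-- Condition (C3) for the `2`-edge-rooted component of `v`:  the unique
shortest path containing both edge roots (resp. the vertex `0̄` and the edge
root, if the component contains `0̄`) has an odd number of bridging edges.
The shortest path containing two edges is the unique path whose first and
last edges are the two rooted edges; if the two edge roots lie on one common
edge (`mult e = 3`) the path is that single edge. -/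
def C3At (mult : P.Ered → ℕ) (v : P.Vred) : Prop :=
  (Reachable P.endsRed (P.mSupport mult) v (⊥ : P.Vred) →
    ∃ (x : P.Vred) (p : MWalk P.endsRed (⊥ : P.Vred) x),
      p.IsPath ∧ p.edgesIn (P.mSupport mult) ∧
      (∃ e, p.edges.getLast? = some e ∧ 2 ≤ mult e) ∧
      Odd (p.bridgeCount P.side)) ∧
  (¬ Reachable P.endsRed (P.mSupport mult) v (⊥ : P.Vred) →
    ∃ (x y : P.Vred) (p : MWalk P.endsRed x y),
      p.IsPath ∧ p.edgesIn (P.mSupport mult) ∧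
      Reachable P.endsRed (P.mSupport mult) v x ∧
      (∃ e, p.edges.head? = some e ∧ 2 ≤ mult e) ∧
      (∃ e, p.edges.getLast? = some e ∧ 2 ≤ mult e) ∧
      (∀ e, p.edges = [e] → mult e = 3) ∧
      Odd (p.bridgeCount P.side))

/-- `mult : Ered → ℕ` is (the multiplicity function of) a 2-edge-rooted
forest of `G^{A,B}_red`:
(C0) its support is a spanning forest;
(C1) at most one component is `2`-edge-rooted;
(C2) every other component is `0`- or `1`-edge-rooted;
(C3) the parity condition on the path joining the two roots. -/
def Is2ERF (mult : P.Ered → ℕ) : Prop :=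
  IsAcyclic P.endsRed (P.mSupport mult) ∧
  (∀ v : P.Vred, P.compCount mult v ≤ 2) ∧
  (∀ u v : P.Vred, P.compCount mult u = 2 → P.compCount mult v = 2 →
    Reachable P.endsRed (P.mSupport mult) u v) ∧
  (∀ v : P.Vred, P.compCount mult v = 2 → P.C3At mult v)

/-! ### Birooted forests -/

/-- `(F, R)` is a birooted forest of `G^{A,B}_red`:  `F` is a spanning forest,
the root set `R` contains `0̄`, every component of `F` contains at least one
root, no component contains three roots, at most one component contains two
roots, and a component with two roots has one root in `A` and the other in
`Ā ∪ {0̄}`. -/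
def IsBirootedForest (F : Finset P.Ered) (R : Set P.Vred) : Prop :=
  IsAcyclic P.endsRed F ∧
  (⊥ : P.Vred) ∈ R ∧
  (∀ v : P.Vred, ∃ r ∈ R, Reachable P.endsRed F v r) ∧
  (∀ r₁ ∈ R, ∀ r₂ ∈ R, ∀ r₃ ∈ R, r₁ ≠ r₂ → r₁ ≠ r₃ → r₂ ≠ r₃ →
    Reachable P.endsRed F r₁ r₂ → Reachable P.endsRed F r₁ r₃ → False) ∧
  (∀ r₁ ∈ R, ∀ r₂ ∈ R, ∀ r₃ ∈ R, ∀ r₄ ∈ R, r₁ ≠ r₂ → r₃ ≠ r₄ →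
    Reachable P.endsRed F r₁ r₂ → Reachable P.endsRed F r₃ r₄ →
    Reachable P.endsRed F r₁ r₃) ∧
  (∀ r₁ ∈ R, ∀ r₂ ∈ R, r₁ ≠ r₂ → Reachable P.endsRed F r₁ r₂ →
    (P.InA r₁ ∧ ¬ P.InA r₂) ∨ (P.InA r₂ ∧ ¬ P.InA r₁))

/-! ### Internal activity and the edge order -/

/-- `e` is internally passive in the spanning tree `T`:  it can be exchanged
for a strictly smaller edge `f` so that the result is again a spanning tree. -/
def InternallyPassive (ord : LinearOrder P.EB) (T : Finset P.EB) (e : P.EB) : Prop :=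
  e ∈ T ∧ ∃ f : P.EB, ord.lt f e ∧ IsSpanningTree P.endsB (insert f (T.erase e))

/-- `e` is internally active in the spanning tree `T`. -/
def InternallyActive (ord : LinearOrder P.EB) (T : Finset P.EB) (e : P.EB) : Prop :=
  e ∈ T ∧ ¬ ∃ f : P.EB, ord.lt f e ∧ IsSpanningTree P.endsB (insert f (T.erase e))

/-- The number of internally passive edges of `T`. -/
def ipCount (ord : LinearOrder P.EB) (T : Finset P.EB) : ℕ :=
  (T.filter fun e => P.InternallyPassive ord T e).card

/-- The smaller endpoint of an edge of `G^{A,B}`. -/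
def endMin (e : P.EB) : P.W := Sym2.lift ⟨fun a b => a ⊓ b, fun a b => inf_comm a b⟩ (P.endsB e)
/-- The larger endpoint of an edge of `G^{A,B}`. -/
def endMax (e : P.EB) : P.W := Sym2.lift ⟨fun a b => a ⊔ b, fun a b => sup_comm a b⟩ (P.endsB e)

/-- The endpoints of an edge, as an ordered pair in the lexicographic square
of the vertex order `0 < 0̄ < 1 < ⋯ < m < 1̄ < ⋯ < n̄`. -/
def lexEnds (e : P.EB) : P.W ×ₗ P.W := toLex (P.endMin e, P.endMax e)

/-- A linear order on the edges of `G^{A,B}` is admissible if it refines the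
lexicographic order on endpoints (so parallel edges are ordered arbitrarily). -/
def AdmissibleOrder (ord : LinearOrder P.EB) : Prop :=
  ∀ e f : P.EB, P.lexEnds e < P.lexEnds f → ord.lt e f

/-- `v` is a connecting vertex of `T`:  `v ∈ A` and `v` is adjacent to `0` in
`T`, or `v ∈ Ā` and `v` is adjacent to `0̄` in `T`. -/
def ConnVertex (T : Finset P.EB) (v : P.Vred) : Prop :=
  (∃ a : Fin P.m, v = P.liftV (P.aVert a) ∧ P.eA a ∈ T) ∨
  (∃ b : Fin P.n, v = P.liftV (P.bVert b) ∧ P.eB b ∈ T)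

/-- `e` is a connecting edge of `T` (an edge `0a`, `a ∈ A`, or `0̄b`, `b ∈ Ā`)
with connecting vertex `v`. -/
def ConnEdge (T : Finset P.EB) (e : P.EB) (v : P.Vred) : Prop :=
  e ∈ T ∧ ((∃ a : Fin P.m, e = P.eA a ∧ v = P.liftV (P.aVert a)) ∨
           (∃ b : Fin P.n, e = P.eB b ∧ v = P.liftV (P.bVert b)))

/-! ### The h-vector -/

/-- `f_{i-1}`:  the number of acyclic edge sets of cardinality `i` in `G^{A,B}`. -/
def numAcyclic (i : ℕ) : ℕ :=
  Nat.card {F : Finset P.EB // IsAcyclic P.endsB F ∧ F.card = i}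

/-- The rank of the graphic matroid of `G^{A,B}`:  `|V| - 1 = m + n + 1`. -/
def d : ℕ := P.m + P.n + 1

/-- `h` is the h-vector of the graphic matroid of `G^{A,B}`:  it satisfies
`Σ_{i=0}^{d} f_{i-1} (t-1)^{d-i} = Σ_{k=0}^{d} h_k t^{d-k}`. -/
def IsHVector (h : ℕ → ℤ) : Prop :=
  ∑ i ∈ Finset.range (P.d + 1),
      Polynomial.C ((P.numAcyclic i : ℤ)) * (Polynomial.X - 1) ^ (P.d - i)
    = ∑ k ∈ Finset.range (P.d + 1), Polynomial.C (h k) * Polynomial.X ^ (P.d - k)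

end BiconedGraph

/-- `(h 0, …, h d)` is a pure O-sequence:  there is a multicomplex `M` of
multisets on a finite ground set (nonempty, closed under sub-multisets), all
of whose inclusion-maximal members have the same cardinality, whose members
all have cardinality at most `d`, and which has exactly `h i` members of
cardinality `i` for every `i ≤ d`. -/
def IsPureOSeq (d : ℕ) (h : ℕ → ℤ) : Prop :=
  ∃ (N : ℕ) (M : Set (Multiset (Fin N))),
    M.Nonempty ∧
    (∀ s ∈ M, ∀ t : Multiset (Fin N), t ≤ s → t ∈ M) ∧
    (∀ s ∈ M, ∀ t ∈ M, (∀ u ∈ M, s ≤ u → u = s) → (∀ u ∈ M, t ≤ u → u = t) →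
      Multiset.card s = Multiset.card t) ∧
    (∀ s ∈ M, Multiset.card s ≤ d) ∧
    (∀ i ≤ d, (Nat.card {s : Multiset (Fin N) // s ∈ M ∧ Multiset.card s = i} : ℤ) = h i)


/-! ### Auxiliary lemmas on walks and reachability -/

section WalkLemmas

variable {ε ν : Type} {ends : ε → Sym2 ν}

namespace MWalk

/-- Concatenation of walks. -/
def append : ∀ {u v w : ν}, MWalk ends u v → MWalk ends v w → MWalk ends u w
  | _, _, _, nil _, q => q
  | _, _, _, cons e x h p, q => cons e x h (p.append q)

lemma edges_append : ∀ {u v w : ν} (p : MWalk ends u v) (q : MWalk ends v w),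
    (p.append q).edges = p.edges ++ q.edges
  | _, _, _, nil _, _ => rfl
  | _, _, _, cons e x h p, q => by simp [append, edges, edges_append p q]

end MWalk

lemma reachable_refl (F : Finset ε) (u : ν) : Reachable ends F u u :=
  ⟨.nil u, fun e he => by simp [MWalk.edges] at he⟩

lemma reachable_single {F : Finset ε} {e : ε} {u v : ν} (he : e ∈ F)
    (h : ends e = s(u, v)) : Reachable ends F u v :=
  ⟨.cons e v h (.nil v), fun g hg => by
    simp [MWalk.edges] at hg; subst hg; exact he⟩

lemma reachable_trans {F : Finset ε} {u v w : ν} (h1 : Reachable ends F u v)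
    (h2 : Reachable ends F v w) : Reachable ends F u w := by
  obtain ⟨p, hp⟩ := h1; obtain ⟨q, hq⟩ := h2
  refine ⟨p.append q, fun e he => ?_⟩
  rw [MWalk.edges_append] at he
  rcases List.mem_append.1 he with h | h
  · exact hp e h
  · exact hq e h

lemma reachable_symm {F : Finset ε} {u v : ν} (h : Reachable ends F u v) :
    Reachable ends F v u := by
  obtain ⟨p, hp⟩ := h
  induction p with
  | nil u => exact reachable_refl F u
  | cons e x h p ih =>
    refine reachable_trans (ih fun g hg => hp g (by simp [MWalk.edges, hg])) ?_
    exact reachable_single (hp e (by simp [MWalk.edges])) (by rw [h, Sym2.eq_swap])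

lemma reachable_mono {F F' : Finset ε} (hFF : F ⊆ F') {u v : ν}
    (h : Reachable ends F u v) : Reachable ends F' u v := by
  obtain ⟨p, hp⟩ := h; exact ⟨p, fun e he => hFF (hp e he)⟩

variable [DecidableEq ε]

lemma reachable_insert_iff {F : Finset ε} {f : ε} {p q : ν} (hf : ends f = s(p, q))
    {u v : ν} :
    Reachable ends (insert f F) u v ↔
      Reachable ends F u v ∨ (Reachable ends F u p ∧ Reachable ends F q v) ∨
        (Reachable ends F u q ∧ Reachable ends F p v) := by
  constructor
  · rintro ⟨w, hw⟩
    induction w with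
    | nil u => exact Or.inl (reachable_refl F u)
    | @cons a b g x h w ih =>
      have hg : g ∈ insert f F := hw g (by simp [MWalk.edges])
      have hrest := ih fun e he => hw e (by simp [MWalk.edges, he])
      rcases Finset.mem_insert.1 hg with hg | hg
      · subst hg
        rw [hf] at h
        rcases Sym2.eq_iff.1 h.symm with ⟨hup, hxq⟩ | ⟨huq, hxp⟩
        · have hup' : Reachable ends F a p := hup ▸ reachable_refl F _
          have hqx : Reachable ends F q x := hxq ▸ reachable_refl F _
          rcases hrest with h1 | ⟨h1, h2⟩ | ⟨h1, h2⟩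
          · exact Or.inr (Or.inl ⟨hup', reachable_trans hqx h1⟩)
          · exact Or.inl (reachable_trans hup'
              (reachable_trans (reachable_symm (reachable_trans hqx h1)) h2))
          · exact Or.inl (reachable_trans hup' h2)
        · have huq' : Reachable ends F a q := huq ▸ reachable_refl F _
          have hpx : Reachable ends F p x := hxp ▸ reachable_refl F _
          rcases hrest with h1 | ⟨h1, h2⟩ | ⟨h1, h2⟩
          · exact Or.inr (Or.inr ⟨huq', reachable_trans hpx h1⟩)
          · exact Or.inl (reachable_trans huq' h2)
          · exact Or.inl (reachable_trans huq'
              (reachable_trans (reachable_symm (reachable_trans hpx h1)) h2))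
      · have hux : Reachable ends F a x := reachable_single hg h
        rcases hrest with h1 | ⟨h1, h2⟩ | ⟨h1, h2⟩
        · exact Or.inl (reachable_trans hux h1)
        · exact Or.inr (Or.inl ⟨reachable_trans hux h1, h2⟩)
        · exact Or.inr (Or.inr ⟨reachable_trans hux h1, h2⟩)
  · have hsub : F ⊆ insert f F := Finset.subset_insert f F
    have hpq : Reachable ends (insert f F) p q :=
      reachable_single (Finset.mem_insert_self f F) hf
    rintro (h | ⟨h1, h2⟩ | ⟨h1, h2⟩)
    · exact reachable_mono hsub h
    · exact reachable_trans (reachable_mono hsub h1)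
        (reachable_trans hpq (reachable_mono hsub h2))
    · exact reachable_trans (reachable_mono hsub h1)
        (reachable_trans (reachable_symm hpq) (reachable_mono hsub h2))

/-- In a spanning tree, every vertex lies on one of the two sides of the cut
obtained by removing an edge. -/
lemma side_total {T : Finset ε} (hT : IsSpanningTree ends T) {e : ε} (heT : e ∈ T)
    {x y : ν} (he : ends e = s(x, y)) (u : ν) :
    Reachable ends (T.erase e) u x ∨ Reachable ends (T.erase e) u y := by
  have h := hT.2 u x
  rw [← Finset.insert_erase heT] at h
  rcases (reachable_insert_iff he).1 h with h | ⟨h1, _⟩ | ⟨h1, h2⟩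
  · exact Or.inl h
  · exact Or.inl h1
  · exact Or.inr h1

lemma not_both_sides {T : Finset ε} (hT : IsSpanningTree ends T) {e : ε} (heT : e ∈ T)
    {x y : ν} (he : ends e = s(x, y)) :
    ¬ Reachable ends (T.erase e) x y := hT.1 e heT x y he

/-- Exchange: inserting an edge that bridges the two sides of a cut gives a
spanning tree. -/
lemma exchange_spanning {T : Finset ε} (hT : IsSpanningTree ends T) {e : ε} (heT : e ∈ T)
    {x y : ν} (he : ends e = s(x, y)) {f : ε} {p q : ν} (hf : ends f = s(p, q))
    (hp : Reachable ends (T.erase e) p x) (hq : Reachable ends (T.erase e) q y) :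
    IsSpanningTree ends (insert f (T.erase e)) := by
  set T' := T.erase e with hT'
  have hxy : ¬ Reachable ends T' x y := not_both_sides hT heT he
  have hfT' : f ∉ T' := by
    intro hfmem
    exact hxy (reachable_trans (reachable_symm hp)
      (reachable_trans (reachable_single hfmem hf) hq))
  constructor
  · intro g hg a b hgab hreach
    rcases Finset.mem_insert.1 hg with hg | hg
    · subst hg
      rw [Finset.erase_insert hfT'] at hreach
      rcases Sym2.eq_iff.1 (hgab.symm.trans hf) with ⟨hap, hbq⟩ | ⟨haq, hbp⟩
      · subst hap; subst hbq
        exact hxy (reachable_trans (reachable_symm hp) (reachable_trans hreach hq))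
      · subst haq; subst hbp
        exact hxy (reachable_trans (reachable_symm hp)
          (reachable_trans (reachable_symm hreach) hq))
    · have hgf : g ≠ f := fun h => hfT' (h ▸ hg)
      rw [Finset.erase_insert_of_ne hgf.symm] at hreach
      have hTacy : ¬ Reachable ends (T.erase g) a b :=
        hT.1 g (Finset.mem_of_mem_erase hg) a b hgab
      have hsub : T'.erase g ⊆ T.erase g :=
        Finset.erase_subset_erase g (Finset.erase_subset e T)
      have hab : Reachable ends T' a b := reachable_single hg hgab
      have hsub2 : T'.erase g ⊆ T' := Finset.erase_subset g T'
      rcases (reachable_insert_iff hf).1 hreach with h | ⟨h1, h2⟩ | ⟨h1, h2⟩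
      · exact hTacy (reachable_mono hsub h)
      · -- a ~ p, q ~ b in T'.erase g; then p ~ q in T', contradicting sides
        refine hxy (reachable_trans (reachable_symm hp) (reachable_trans ?_ hq))
        exact reachable_trans (reachable_symm (reachable_mono hsub2 h1))
          (reachable_trans hab (reachable_symm (reachable_mono hsub2 h2)))
      · refine hxy (reachable_trans (reachable_symm hp) (reachable_trans ?_ hq))
        exact reachable_trans (reachable_mono hsub2 h2)
          (reachable_trans (reachable_symm hab) (reachable_mono hsub2 h1))
  · intro u w
    have hsub : T' ⊆ insert f T' := Finset.subset_insert f T'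
    have hxy' : Reachable ends (insert f T') x y :=
      reachable_trans (reachable_mono hsub (reachable_symm hp))
        (reachable_trans (reachable_single (Finset.mem_insert_self f T') hf)
          (reachable_mono hsub hq))
    have key : ∀ z : ν, Reachable ends (insert f T') z x := by
      intro z
      rcases side_total hT heT he z with h | h
      · exact reachable_mono hsub h
      · exact reachable_trans (reachable_mono hsub h) (reachable_symm hxy')
    exact reachable_trans (key u) (reachable_symm (key w))

/-- If exchanging `e` for `f` yields a spanning tree, then `f` bridges the cut. -/
lemma exchange_cross {T : Finset ε} (hT : IsSpanningTree ends T) {e : ε} (heT : e ∈ T)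
    {x y : ν} (he : ends e = s(x, y)) {f : ε} {p q : ν} (hf : ends f = s(p, q))
    (hST : IsSpanningTree ends (insert f (T.erase e))) :
    (Reachable ends (T.erase e) p x ∧ Reachable ends (T.erase e) q y) ∨
      (Reachable ends (T.erase e) q x ∧ Reachable ends (T.erase e) p y) := by
  have hxy : ¬ Reachable ends (T.erase e) x y := not_both_sides hT heT he
  have h := hST.2 x y
  rcases (reachable_insert_iff hf).1 h with h | ⟨h1, h2⟩ | ⟨h1, h2⟩
  · exact absurd h hxy
  · exact Or.inl ⟨reachable_symm h1, h2⟩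
  · exact Or.inr ⟨reachable_symm h1, h2⟩

end WalkLemmas

/-! ### Biconed-specific auxiliary lemmas -/

namespace BiconedGraph

variable {P : BiconedGraph}

lemma liftW_injective : Function.Injective P.liftW := fun _ _ h => by
  simpa [liftW] using h

lemma liftV_injective : Function.Injective P.liftV := fun _ _ h => by
  simpa [liftV] using h

lemma liftW_ne_bot (x : P.Vred) : P.liftW x ≠ (⊥ : P.W) := WithBot.coe_ne_bot

lemma bot_lt_liftW (x : P.Vred) : (⊥ : P.W) < P.liftW x := WithBot.bot_lt_coe x

lemma liftW_lt_liftW {x y : P.Vred} (h : x < y) : P.liftW x < P.liftW y :=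
  WithBot.coe_lt_coe.2 h

lemma liftW_bot_lt_liftV (z : P.VG) : P.liftW ⊥ < P.liftW (P.liftV z) :=
  liftW_lt_liftW (WithBot.bot_lt_coe z)

lemma aVert_lt_bVert (a : Fin P.m) (b : Fin P.n) : P.aVert a < P.bVert b :=
  Sum.Lex.inl_lt_inr a b

lemma aVert_injective : Function.Injective P.aVert := fun a a' h => by
  simpa [aVert] using h

lemma bVert_injective : Function.Injective P.bVert := fun b b' h => by
  simpa [bVert] using h

lemma aVert_ne_bVert (a : Fin P.m) (b : Fin P.n) : P.aVert a ≠ P.bVert b := by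
  simp [aVert, bVert]

lemma endsB_redToEB (d : P.Ered) :
    P.endsB (P.redToEB d) = (P.endsRed d).map P.liftW := by
  cases d with
  | inl a => simp [redToEB, endsB, endsRed, Sym2.map_pair_eq]
  | inr e =>
    simp only [redToEB, endsB, endsRed, Sym2.map_map]
    rfl

lemma redToEB_mem_redOf {T : Finset P.EB} {d : P.Ered} (h : P.redToEB d ∈ T) :
    d ∈ P.redOf T := by simp [redOf, h]

lemma mem_of_mem_redOf {T : Finset P.EB} {d : P.Ered} (h : d ∈ P.redOf T) :
    P.redToEB d ∈ T := by simpa [redOf] using h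

lemma redToEB_ne_e00 (d : P.Ered) : P.redToEB d ≠ P.e00 := by
  cases d <;> simp [redToEB, e00, eS, eG]

lemma redToEB_ne_eA (d : P.Ered) (a : Fin P.m) : P.redToEB d ≠ P.eA a := by
  cases d <;> simp [redToEB, eA, eS, eG]

lemma redToEB_ne_eB (d : P.Ered) (b : Fin P.n) : P.redToEB d ≠ P.eB b := by
  cases d <;> simp [redToEB, eB, eS, eG]

/-- Lifting a reachability in `G^{A,B}_red` along `T \ T₀` to one in `G^{A,B}`
avoiding a fixed non-reduced edge `e₀`. -/
lemma lift_reach {T : Finset P.EB} {e₀ : P.EB} (he₀ : ∀ d : P.Ered, P.redToEB d ≠ e₀)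
    {u v : P.Vred} (h : Reachable P.endsRed (P.redOf T) u v) :
    Reachable P.endsB (T.erase e₀) (P.liftW u) (P.liftW v) := by
  obtain ⟨p, hp⟩ := h
  induction p with
  | nil u => exact reachable_refl _ _
  | @cons a b d x hd p ih =>
    have hdT : d ∈ P.redOf T := hp d (by simp [MWalk.edges])
    have h1 : Reachable P.endsB (T.erase e₀) (P.liftW a) (P.liftW x) := by
      refine reachable_single (Finset.mem_erase.2 ⟨he₀ d, mem_of_mem_redOf hdT⟩) ?_
      rw [endsB_redToEB, hd, Sym2.map_pair_eq]
    exact reachable_trans h1 (ih fun g hg => hp g (by simp [MWalk.edges, hg]))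

lemma sym2_exists {α : Type*} (q : Sym2 α) : ∃ x y, q = s(x, y) := by
  induction q using Sym2.ind with | _ x y => exact ⟨x, y, rfl⟩

lemma endsB_e00 : P.endsB P.e00 = s((⊥ : P.W), P.liftW ⊥) := rfl
lemma endsB_eA (a : Fin P.m) :
    P.endsB (P.eA a) = s((⊥ : P.W), P.liftW (P.liftV (P.aVert a))) := rfl
lemma endsB_eB (b : Fin P.n) :
    P.endsB (P.eB b) = s(P.liftW ⊥, P.liftW (P.liftV (P.bVert b))) := rfl
lemma endsB_eS (a : {a : Fin P.m // a ∈ P.S}) :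
    P.endsB (P.eS a) = s(P.liftW ⊥, P.liftW (P.liftV (P.aVert a.1))) := rfl

lemma endsB_eG {d : P.E} {z₁ z₂ : P.VG} (h : P.ends d = s(z₁, z₂)) :
    P.endsB (P.eG d) = s(P.liftW (P.liftV z₁), P.liftW (P.liftV z₂)) := by
  show (P.ends d).map _ = _
  rw [h, Sym2.map_pair_eq]

lemma lexEnds_eq {e : P.EB} {c₁ c₂ : P.W} (h : P.endsB e = s(c₁, c₂)) (hle : c₁ ≤ c₂) :
    P.lexEnds e = toLex (c₁, c₂) := by
  simp [lexEnds, endMin, endMax, h, Sym2.lift_mk, inf_eq_left.2 hle, sup_eq_right.2 hle]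

lemma lexEnds_e00 : P.lexEnds P.e00 = toLex ((⊥ : P.W), P.liftW ⊥) :=
  lexEnds_eq endsB_e00 bot_le
lemma lexEnds_eA (a : Fin P.m) :
    P.lexEnds (P.eA a) = toLex ((⊥ : P.W), P.liftW (P.liftV (P.aVert a))) :=
  lexEnds_eq (endsB_eA a) bot_le
lemma lexEnds_eB (b : Fin P.n) :
    P.lexEnds (P.eB b) = toLex (P.liftW ⊥, P.liftW (P.liftV (P.bVert b))) :=
  lexEnds_eq (endsB_eB b) (liftW_bot_lt_liftV _).le
lemma lexEnds_eS (a : {a : Fin P.m // a ∈ P.S}) :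
    P.lexEnds (P.eS a) = toLex (P.liftW ⊥, P.liftW (P.liftV (P.aVert a.1))) :=
  lexEnds_eq (endsB_eS a) (liftW_bot_lt_liftV _).le

lemma liftW_bot_lt_endMin_eG (d : P.E) : P.liftW ⊥ < P.endMin (P.eG d) := by
  obtain ⟨z₁, z₂, h⟩ := sym2_exists (P.ends d)
  have hB := endsB_eG (P := P) h
  rw [endMin, hB, Sym2.lift_mk]
  show P.liftW ⊥ < P.liftW (P.liftV z₁) ⊓ P.liftW (P.liftV z₂)
  rcases le_total (P.liftW (P.liftV z₁)) (P.liftW (P.liftV z₂)) with hle | hle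
  · rw [inf_eq_left.2 hle]; exact liftW_bot_lt_liftV _
  · rw [inf_eq_right.2 hle]; exact liftW_bot_lt_liftV _

lemma lexEnds_lt_eG {e : P.EB} {c₁ c₂ : P.W} (h : P.lexEnds e = toLex (c₁, c₂))
    (hc : c₁ ≤ P.liftW ⊥) (d : P.E) : P.lexEnds e < P.lexEnds (P.eG d) := by
  rw [h, lexEnds]
  exact Prod.Lex.lt_iff.2 (Or.inl (lt_of_le_of_lt hc (liftW_bot_lt_endMin_eG d)))

/-- The key projection step: a `T.erase e₀`-edge incident to the component `K`
of the connecting vertex `v` in `T \ T₀` is an edge of `T \ T₀` (given that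
`K` avoids `0̄` and contains no connecting vertex besides `v`). -/
lemma proj_step {T : Finset P.EB} {e₀ : P.EB} {v : P.Vred}
    (hce : P.ConnEdge T e₀ v)
    (hKbot : ¬ Reachable P.endsRed (P.redOf T) v ⊥)
    (hconn : ∀ u : P.Vred, Reachable P.endsRed (P.redOf T) v u → P.ConnVertex T u → u = v)
    {g : P.EB} (hg : g ∈ T.erase e₀) {u : P.Vred}
    (hu : Reachable P.endsRed (P.redOf T) v u) {x : P.W}
    (h : P.endsB g = s(P.liftW u, x)) :
    ∃ u' : P.Vred, x = P.liftW u' ∧ Reachable P.endsRed (P.redOf T) v u' := by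
  have hgT : g ∈ T := Finset.mem_of_mem_erase hg
  have hge₀ : g ≠ e₀ := (Finset.mem_erase.1 hg).1
  have hubot : u ≠ ⊥ := fun hbot => hKbot (hbot ▸ hu)
  obtain (⟨_⟩ | a | b | s | d) := g
  · -- g = e00
    rcases Sym2.eq_iff.1 ((endsB_e00 (P := P)).symm.trans h) with ⟨h1, _⟩ | ⟨_, h2⟩
    · exact absurd h1.symm (liftW_ne_bot u)
    · exact absurd (liftW_injective h2) (fun hh => hubot hh.symm)
  · -- g = eA a
    rcases Sym2.eq_iff.1 ((endsB_eA (P := P) a).symm.trans h) with ⟨h1, _⟩ | ⟨_, h2⟩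
    · exact absurd h1.symm (liftW_ne_bot u)
    · exfalso
      have huv : u = v := hconn u hu (Or.inl ⟨a, (liftW_injective h2).symm, hgT⟩)
      rcases hce.2 with ⟨a', he₀, hv⟩ | ⟨b, he₀, hv⟩
      · have : P.aVert a = P.aVert a' := liftV_injective (liftW_injective h2 ▸ (huv ▸ hv))
        exact hge₀ (by rw [he₀, aVert_injective this])
      · exact aVert_ne_bVert a b (liftV_injective ((liftW_injective h2).trans (huv.trans hv)))
  · -- g = eB b
    rcases Sym2.eq_iff.1 ((endsB_eB (P := P) b).symm.trans h) with ⟨h1, _⟩ | ⟨_, h2⟩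
    · exact absurd (liftW_injective h1).symm hubot
    · exfalso
      have huv : u = v := hconn u hu (Or.inr ⟨b, (liftW_injective h2).symm, hgT⟩)
      rcases hce.2 with ⟨a', he₀, hv⟩ | ⟨b', he₀, hv⟩
      · exact aVert_ne_bVert a' b (liftV_injective ((liftW_injective h2).trans (huv.trans hv))).symm
      · have : P.bVert b = P.bVert b' := liftV_injective (liftW_injective h2 ▸ (huv ▸ hv))
        exact hge₀ (by rw [he₀, bVert_injective this])
  · -- g = eS s
    rcases Sym2.eq_iff.1 ((endsB_eS (P := P) s).symm.trans h) with ⟨h1, _⟩ | ⟨_, h2⟩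
    · exact absurd (liftW_injective h1).symm hubot
    · exfalso
      have hd : (Sum.inl s : P.Ered) ∈ P.redOf T := redToEB_mem_redOf hgT
      have hstep : Reachable P.endsRed (P.redOf T) u ⊥ := by
        refine reachable_single hd ?_
        show s((⊥ : P.Vred), P.liftV (P.aVert s.1)) = _
        rw [← liftW_injective h2, Sym2.eq_swap]
      exact hKbot (reachable_trans hu hstep)
  · -- g = eG d
    obtain ⟨z₁, z₂, hz⟩ := sym2_exists (P.ends d)
    have hd : (Sum.inr d : P.Ered) ∈ P.redOf T := redToEB_mem_redOf hgT
    have hends : P.endsRed (Sum.inr d) = s(P.liftV z₁, P.liftV z₂) := by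
      show (P.ends d).map _ = _
      rw [hz, Sym2.map_pair_eq]
    rcases Sym2.eq_iff.1 ((endsB_eG (P := P) hz).symm.trans h) with ⟨h1, h2⟩ | ⟨h1, h2⟩
    · refine ⟨P.liftV z₂, h2.symm, reachable_trans hu (reachable_single hd ?_)⟩
      rw [hends, liftW_injective h1]
    · refine ⟨P.liftV z₁, h1.symm, reachable_trans hu (reachable_single hd ?_)⟩
      rw [hends, liftW_injective h2, Sym2.eq_swap]

/-- Projection: the component of the connecting vertex `v` in `T.erase e₀`
consists exactly of the lifts of its component in `T \ T₀`. -/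
lemma proj_reach {T : Finset P.EB} {e₀ : P.EB} {v : P.Vred}
    (hce : P.ConnEdge T e₀ v)
    (hKbot : ¬ Reachable P.endsRed (P.redOf T) v ⊥)
    (hconn : ∀ u : P.Vred, Reachable P.endsRed (P.redOf T) v u → P.ConnVertex T u → u = v)
    {w : P.W} (h : Reachable P.endsB (T.erase e₀) (P.liftW v) w) :
    ∃ u : P.Vred, w = P.liftW u ∧ Reachable P.endsRed (P.redOf T) v u := by
  obtain ⟨p, hp⟩ := h
  suffices H : ∀ (w₁ w₂ : P.W) (p : MWalk P.endsB w₁ w₂),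
      p.edgesIn (T.erase e₀) →
      (∃ u : P.Vred, w₁ = P.liftW u ∧ Reachable P.endsRed (P.redOf T) v u) →
      ∃ u : P.Vred, w₂ = P.liftW u ∧ Reachable P.endsRed (P.redOf T) v u by
    exact H _ _ p hp ⟨v, rfl, reachable_refl _ _⟩
  intro w₁ w₂ p
  induction p with
  | nil w => exact fun _ h => h
  | @cons w₁ w₂ g x hg p ih =>
    intro hp ⟨u, hw₁, hu⟩
    subst hw₁
    obtain ⟨u', hx, hu'⟩ := proj_step hce hKbot hconn (hp g (by simp [MWalk.edges])) hu hg
    exact ih (fun e he => hp e (by simp [MWalk.edges, he])) ⟨u', hx, hu'⟩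

lemma vg_cases (z : P.VG) : (∃ a, z = P.aVert a) ∨ (∃ b, z = P.bVert b) := by
  rcases h : ofLex z with a | b
  · exact Or.inl ⟨a, by rw [aVert, ← h]; rfl⟩
  · exact Or.inr ⟨b, by rw [bVert, ← h]; rfl⟩

lemma vred_cases (u : P.Vred) :
    u = ⊥ ∨ (∃ a, u = P.liftV (P.aVert a)) ∨ (∃ b, u = P.liftV (P.bVert b)) := by
  cases u with
  | none => exact Or.inl rfl
  | some z =>
    rcases vg_cases z with ⟨a, rfl⟩ | ⟨b, rfl⟩
    · exact Or.inr (Or.inl ⟨a, rfl⟩)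
    · exact Or.inr (Or.inr ⟨b, rfl⟩)

lemma liftV_aVert_lt_iff {a' a : Fin P.m} :
    P.liftV (P.aVert a') < P.liftV (P.aVert a) ↔ a' < a :=
  WithBot.coe_lt_coe.trans Sum.Lex.inl_lt_inl_iff

lemma liftV_bVert_lt_iff {b' b : Fin P.n} :
    P.liftV (P.bVert b') < P.liftV (P.bVert b) ↔ b' < b :=
  WithBot.coe_lt_coe.trans Sum.Lex.inr_lt_inr_iff

lemma not_liftV_b_lt_a (b : Fin P.n) (a : Fin P.m) :
    ¬ P.liftV (P.bVert b) < P.liftV (P.aVert a) := fun h =>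
  Sum.Lex.not_inr_lt_inl (WithBot.coe_lt_coe.1 h)

lemma not_liftV_b_le_a (b : Fin P.n) (a : Fin P.m) :
    ¬ P.liftV (P.bVert b) ≤ P.liftV (P.aVert a) := fun h =>
  Sum.Lex.not_inr_le_inl (WithBot.coe_le_coe.1 h)

lemma liftV_ne_bot (x : P.VG) : P.liftV x ≠ (⊥ : P.Vred) := WithBot.coe_ne_bot

end BiconedGraph

/-- Remark 3.3.  An edge `e` of a spanning tree `T` of
`G^{A,B}` is internally active iff either `e = 00̄`, or `e` is a connecting
edge whose connecting vertex `v` satisfies:  the component of `v` in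
`T \\ T₀` does not contain `0̄`, contains no connecting vertex other than `v`,
and `v` is the smallest vertex of that component. -/
theorem internallyActive_iff (P : BiconedGraph)
    (ord : LinearOrder P.EB) (hord : P.AdmissibleOrder ord)
    (T : Finset P.EB) (hT : IsSpanningTree P.endsB T) (e : P.EB) (heT : e ∈ T) :
    P.InternallyActive ord T e ↔
      (e = P.e00 ∨
        ∃ v : P.Vred, P.ConnEdge T e v ∧
          ¬ Reachable P.endsRed (P.redOf T) v (⊥ : P.Vred) ∧
          (∀ u : P.Vred, Reachable P.endsRed (P.redOf T) v u →
            P.ConnVertex T u → u = v) ∧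
          (∀ u : P.Vred, Reachable P.endsRed (P.redOf T) v u → v ≤ u)) := by
  open BiconedGraph in
  have hirr : ∀ f : P.EB, ¬ ord.lt f f := fun f h =>
    ((ord.lt_iff_le_not_ge f f).1 h).2 ((ord.lt_iff_le_not_ge f f).1 h).1
  have hasym : ∀ {f g : P.EB}, ord.lt f g → ¬ ord.lt g f := fun {f g} h h' =>
    ((ord.lt_iff_le_not_ge f g).1 h).2 ((ord.lt_iff_le_not_ge g f).1 h').1
  have hnotlt : ∀ {f g : P.EB}, P.lexEnds f < P.lexEnds g → ¬ ord.lt g f :=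
    fun {f g} h => hasym (hord _ _ h)
  have hmin00 : ∀ f : P.EB, f ≠ P.e00 → P.lexEnds P.e00 < P.lexEnds f := by
    rintro (x | a | b | s | d) hf
    · cases x; exact absurd rfl hf
    · rw [lexEnds_e00, lexEnds_eA]
      exact Prod.Lex.lt_iff.2 (Or.inr ⟨rfl, liftW_bot_lt_liftV _⟩)
    · rw [lexEnds_e00, lexEnds_eB]
      exact Prod.Lex.lt_iff.2 (Or.inl (bot_lt_liftW _))
    · rw [lexEnds_e00, lexEnds_eS]
      exact Prod.Lex.lt_iff.2 (Or.inl (bot_lt_liftW _))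
    · exact lexEnds_lt_eG lexEnds_e00 bot_le d
  by_cases h00 : e = P.e00
  · subst h00
    constructor
    · intro _; exact Or.inl rfl
    · rintro - 
      refine ⟨heT, ?_⟩
      rintro ⟨f, hlt, -⟩
      by_cases hf : f = P.e00
      · subst hf; exact hirr _ hlt
      · exact hnotlt (hmin00 f hf) hlt
  -- `e ≠ 00̄`
  obtain (x | a | b | s | d) := e
  · cases x; exact absurd rfl h00
  -- ### Case e = eA a
  · set v : P.Vred := P.liftV (P.aVert a) with hv
    have hends : P.endsB (P.eA a) = s((⊥ : P.W), P.liftW v) := endsB_eA a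
    have hacy : ¬ Reachable P.endsB ((T.erase (P.eA a))) (⊥ : P.W) (P.liftW v) :=
      not_both_sides hT heT hends
    have hlift : ∀ {u : P.Vred}, Reachable P.endsRed (P.redOf T) v u →
        Reachable P.endsB (T.erase (P.eA a)) (P.liftW v) (P.liftW u) :=
      fun h => lift_reach (fun d => redToEB_ne_eA d a) h
    have hf00 : P.endsB P.e00 = s((⊥ : P.W), P.liftW (⊥ : P.Vred)) := endsB_e00
    constructor
    · -- active → conditions
      intro hact
      have hpassive : ∀ f : P.EB, ord.lt f (P.eA a) →
          IsSpanningTree P.endsB (insert f (T.erase (P.eA a))) → False :=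
        fun f h1 h2 => hact.2 ⟨f, h1, h2⟩
      have hKbot : ¬ Reachable P.endsRed (P.redOf T) v ⊥ := by
        intro hreach
        refine hpassive P.e00 (hord _ _ (hmin00 _ h00)) ?_
        exact exchange_spanning hT heT hends hf00 (reachable_refl _ _)
          (reachable_symm (hlift hreach))
      refine Or.inr ⟨v, ⟨heT, Or.inl ⟨a, rfl, rfl⟩⟩, hKbot, ?_, ?_⟩
      · -- no other connecting vertex
        intro u hu hcv
        by_contra hne
        rcases hcv with ⟨a', hu', ha'T⟩ | ⟨b', hu', hb'T⟩
        · have ha'a : a' ≠ a := fun h => hne (by rw [hu', h])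
          have hmem : P.eA a' ∈ T.erase (P.eA a) :=
            Finset.mem_erase.2 ⟨by simp [ha'a], ha'T⟩
          have h1 : Reachable P.endsB (T.erase (P.eA a)) (⊥ : P.W) (P.liftW u) :=
            reachable_single hmem (by rw [endsB_eA, hu'])
          exact hacy (reachable_trans h1 (reachable_symm (hlift hu)))
        · have hmem : P.eB b' ∈ T.erase (P.eA a) :=
            Finset.mem_erase.2 ⟨by simp, hb'T⟩
          have h1 : Reachable P.endsB (T.erase (P.eA a)) (P.liftW ⊥) (P.liftW u) :=
            reachable_single hmem (by rw [endsB_eB, hu'])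
          refine hpassive P.e00 (hord _ _ (hmin00 _ h00)) ?_
          exact exchange_spanning hT heT hends hf00 (reachable_refl _ _)
            (reachable_trans h1 (reachable_symm (hlift hu)))
      · -- minimality
        intro u hu
        by_contra hnle
        have hlt' : u < v := not_le.1 hnle
        rcases vred_cases u with rfl | ⟨a', rfl⟩ | ⟨b', rfl⟩
        · exact hKbot hu
        · have haa' : a' < a := liftV_aVert_lt_iff.1 hlt'
          refine hpassive (P.eA a') ?_ ?_
          · refine hord _ _ ?_
            rw [lexEnds_eA, lexEnds_eA]
            exact Prod.Lex.lt_iff.2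
              (Or.inr ⟨rfl, liftW_lt_liftW (liftV_aVert_lt_iff.2 haa')⟩)
          · exact exchange_spanning hT heT hends (endsB_eA a') (reachable_refl _ _)
              (reachable_symm (hlift hu))
        · exact not_liftV_b_lt_a b' a hlt'
    · -- conditions → active
      rintro (h | ⟨v', hce, hKbot, hconn, hmin⟩)
      · exact absurd h h00
      have hv' : v' = v := by
        rcases hce.2 with ⟨a', he', hveq⟩ | ⟨b', he', hveq⟩
        · simp only [eA, Sum.inr.injEq, Sum.inl.injEq] at he'
          rw [hveq, ← he']
        · simp [eA, eB] at he'
      subst hv'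
      have hproj : ∀ {w : P.W}, Reachable P.endsB (T.erase (P.eA a)) (P.liftW v) w →
          ∃ u : P.Vred, w = P.liftW u ∧ Reachable P.endsRed (P.redOf T) v u :=
        fun h => proj_reach hce hKbot hconn h
      refine ⟨heT, ?_⟩
      rintro ⟨f, hltf, hsp⟩
      obtain (x | a' | b' | s' | d) := f
      · -- f = 00̄
        cases x
        rcases exchange_cross hT heT hends hf00 hsp with ⟨-, h2⟩ | ⟨-, h2⟩
        · obtain ⟨u, hu1, hu2⟩ := hproj (reachable_symm h2)
          rw [← liftW_injective hu1] at hu2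
          exact hKbot hu2
        · obtain ⟨u, hu1, -⟩ := hproj (reachable_symm h2)
          exact liftW_ne_bot u hu1.symm
      · -- f = eA a'
        rcases exchange_cross hT heT hends (endsB_eA a') hsp with ⟨-, h2⟩ | ⟨-, h2⟩
        · obtain ⟨u, hu1, hu2⟩ := hproj (reachable_symm h2)
          rw [← liftW_injective hu1] at hu2
          have hle := hmin _ hu2
          by_cases haa : a' = a
          · subst haa; exact hirr _ hltf
          · have : v < P.liftV (P.aVert a') := lt_of_le_of_ne hle
              (fun h => haa (aVert_injective (liftV_injective h.symm)))
            refine hnotlt ?_ hltf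
            rw [lexEnds_eA, lexEnds_eA]
            exact Prod.Lex.lt_iff.2 (Or.inr ⟨rfl, liftW_lt_liftW this⟩)
        · obtain ⟨u, hu1, -⟩ := hproj (reachable_symm h2)
          exact liftW_ne_bot u hu1.symm
      · -- f = eB b'
        refine hnotlt ?_ hltf
        rw [lexEnds_eA, lexEnds_eB]
        exact Prod.Lex.lt_iff.2 (Or.inl (bot_lt_liftW _))
      · -- f = eS s'
        refine hnotlt ?_ hltf
        rw [lexEnds_eA, lexEnds_eS]
        exact Prod.Lex.lt_iff.2 (Or.inl (bot_lt_liftW _))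
      · -- f = eG d
        exact hnotlt (lexEnds_lt_eG (lexEnds_eA a) bot_le d) hltf
  -- ### Case e = eB b
  · set v : P.Vred := P.liftV (P.bVert b) with hv
    have hends : P.endsB (P.eB b) = s(P.liftW (⊥ : P.Vred), P.liftW v) := endsB_eB b
    have hacy : ¬ Reachable P.endsB ((T.erase (P.eB b))) (P.liftW (⊥ : P.Vred)) (P.liftW v) :=
      not_both_sides hT heT hends
    have hlift : ∀ {u : P.Vred}, Reachable P.endsRed (P.redOf T) v u →
        Reachable P.endsB (T.erase (P.eB b)) (P.liftW v) (P.liftW u) :=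
      fun h => lift_reach (fun d => redToEB_ne_eB d b) h
    have hf00 : P.endsB P.e00 = s(P.liftW (⊥ : P.Vred), (⊥ : P.W)) := by
      rw [endsB_e00, Sym2.eq_swap]
    constructor
    · -- active → conditions
      intro hact
      have hpassive : ∀ f : P.EB, ord.lt f (P.eB b) →
          IsSpanningTree P.endsB (insert f (T.erase (P.eB b))) → False :=
        fun f h1 h2 => hact.2 ⟨f, h1, h2⟩
      have hKbot : ¬ Reachable P.endsRed (P.redOf T) v ⊥ :=
        fun hreach => hacy (reachable_symm (hlift hreach))
      refine Or.inr ⟨v, ⟨heT, Or.inr ⟨b, rfl, rfl⟩⟩, hKbot, ?_, ?_⟩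
      · -- no other connecting vertex
        intro u hu hcv
        by_contra hne
        rcases hcv with ⟨a', hu', ha'T⟩ | ⟨b', hu', hb'T⟩
        · have hmem : P.eA a' ∈ T.erase (P.eB b) :=
            Finset.mem_erase.2 ⟨by simp, ha'T⟩
          have h1 : Reachable P.endsB (T.erase (P.eB b)) (⊥ : P.W) (P.liftW u) :=
            reachable_single hmem (by rw [endsB_eA, hu'])
          refine hpassive P.e00 (hord _ _ (hmin00 _ h00)) ?_
          exact exchange_spanning hT heT hends hf00 (reachable_refl _ _)
            (reachable_trans h1 (reachable_symm (hlift hu)))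
        · have hb'b : b' ≠ b := fun h => hne (by rw [hu', h])
          have hmem : P.eB b' ∈ T.erase (P.eB b) :=
            Finset.mem_erase.2 ⟨by simp [hb'b], hb'T⟩
          have h1 : Reachable P.endsB (T.erase (P.eB b)) (P.liftW ⊥) (P.liftW u) :=
            reachable_single hmem (by rw [endsB_eB, hu'])
          exact hacy (reachable_trans h1 (reachable_symm (hlift hu)))
      · -- minimality
        intro u hu
        by_contra hnle
        have hlt' : u < v := not_le.1 hnle
        rcases vred_cases u with rfl | ⟨a', rfl⟩ | ⟨b', rfl⟩
        · exact hKbot hu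
        · by_cases h0y : Reachable P.endsB (T.erase (P.eB b)) (⊥ : P.W) (P.liftW v)
          · refine hpassive P.e00 (hord _ _ (hmin00 _ h00)) ?_
            exact exchange_spanning hT heT hends hf00 (reachable_refl _ _) h0y
          · have h0x : Reachable P.endsB (T.erase (P.eB b)) (⊥ : P.W) (P.liftW ⊥) :=
              (side_total hT heT hends (⊥ : P.W)).resolve_right h0y
            refine hpassive (P.eA a') ?_ ?_
            · refine hord _ _ ?_
              rw [lexEnds_eA, lexEnds_eB]
              exact Prod.Lex.lt_iff.2 (Or.inl (bot_lt_liftW _))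
            · exact exchange_spanning hT heT hends (endsB_eA a') h0x
                (reachable_symm (hlift hu))
        · have hbb' : b' < b := liftV_bVert_lt_iff.1 hlt'
          refine hpassive (P.eB b') ?_ ?_
          · refine hord _ _ ?_
            rw [lexEnds_eB, lexEnds_eB]
            exact Prod.Lex.lt_iff.2
              (Or.inr ⟨rfl, liftW_lt_liftW (liftV_bVert_lt_iff.2 hbb')⟩)
          · exact exchange_spanning hT heT hends (endsB_eB b') (reachable_refl _ _)
              (reachable_symm (hlift hu))
    · -- conditions → active
      rintro (h | ⟨v', hce, hKbot, hconn, hmin⟩)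
      · exact absurd h h00
      have hv' : v' = v := by
        rcases hce.2 with ⟨a', he', hveq⟩ | ⟨b', he', hveq⟩
        · simp [eA, eB] at he'
        · simp only [eB, Sum.inr.injEq, Sum.inl.injEq] at he'
          rw [hveq, ← he']
      subst hv'
      have hproj : ∀ {w : P.W}, Reachable P.endsB (T.erase (P.eB b)) (P.liftW v) w →
          ∃ u : P.Vred, w = P.liftW u ∧ Reachable P.endsRed (P.redOf T) v u :=
        fun h => proj_reach hce hKbot hconn h
      have hbotK : ∀ {w : P.W}, Reachable P.endsB (T.erase (P.eB b)) w (P.liftW v) →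
          w ≠ (⊥ : P.W) ∧ (w = P.liftW ⊥ → False) := by
        intro w h
        obtain ⟨u, hu1, hu2⟩ := hproj (reachable_symm h)
        subst hu1
        refine ⟨liftW_ne_bot u, fun h' => ?_⟩
        rw [liftW_injective h'] at hu2
        exact hKbot hu2
      refine ⟨heT, ?_⟩
      rintro ⟨f, hltf, hsp⟩
      obtain (x | a' | b' | s' | d) := f
      · -- f = 00̄
        cases x
        rcases exchange_cross hT heT hends endsB_e00 hsp with ⟨-, h2⟩ | ⟨-, h2⟩
        · exact (hbotK h2).2 rfl
        · exact (hbotK h2).1 rfl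
      · -- f = eA a'
        rcases exchange_cross hT heT hends (endsB_eA a') hsp with ⟨-, h2⟩ | ⟨-, h2⟩
        · obtain ⟨u, hu1, hu2⟩ := hproj (reachable_symm h2)
          rw [← liftW_injective hu1] at hu2
          exact not_liftV_b_le_a b a' (hmin _ hu2)
        · exact (hbotK h2).1 rfl
      · -- f = eB b'
        rcases exchange_cross hT heT hends (endsB_eB b') hsp with ⟨-, h2⟩ | ⟨-, h2⟩
        · obtain ⟨u, hu1, hu2⟩ := hproj (reachable_symm h2)
          rw [← liftW_injective hu1] at hu2
          have hle := hmin _ hu2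
          by_cases hbb : b' = b
          · subst hbb; exact hirr _ hltf
          · have : v < P.liftV (P.bVert b') := lt_of_le_of_ne hle
              (fun h => hbb (bVert_injective (liftV_injective h.symm)))
            refine hnotlt ?_ hltf
            rw [lexEnds_eB, lexEnds_eB]
            exact Prod.Lex.lt_iff.2 (Or.inr ⟨rfl, liftW_lt_liftW this⟩)
        · exact (hbotK h2).2 rfl
      · -- f = eS s'
        rcases exchange_cross hT heT hends (endsB_eS s') hsp with ⟨-, h2⟩ | ⟨-, h2⟩
        · obtain ⟨u, hu1, hu2⟩ := hproj (reachable_symm h2)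
          rw [← liftW_injective hu1] at hu2
          exact not_liftV_b_le_a b s'.1 (hmin _ hu2)
        · exact (hbotK h2).2 rfl
      · -- f = eG d
        exact hnotlt (lexEnds_lt_eG (lexEnds_eB b) le_rfl d) hltf
  -- ### Case e = eS s
  · constructor
    · -- always internally passive
      intro hact
      exfalso
      have hends : P.endsB (P.eS s) =
          s(P.liftW (⊥ : P.Vred), P.liftW (P.liftV (P.aVert s.1))) := endsB_eS s
      by_cases h0 : Reachable P.endsB (T.erase (P.eS s)) (⊥ : P.W)
          (P.liftW (P.liftV (P.aVert s.1)))
      · refine hact.2 ⟨P.e00, hord _ _ (hmin00 _ h00), ?_⟩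
        exact exchange_spanning hT heT hends (by rw [endsB_e00, Sym2.eq_swap])
          (reachable_refl _ _) h0
      · have h0x : Reachable P.endsB (T.erase (P.eS s)) (⊥ : P.W) (P.liftW ⊥) :=
          (side_total hT heT hends (⊥ : P.W)).resolve_right h0
        refine hact.2 ⟨P.eA s.1, hord _ _ ?_, ?_⟩
        · rw [lexEnds_eA, lexEnds_eS]
          exact Prod.Lex.lt_iff.2 (Or.inl (bot_lt_liftW _))
        · exact exchange_spanning hT heT hends (endsB_eA s.1) h0x (reachable_refl _ _)
    · rintro (h | ⟨v', hce, -⟩)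
      · exact absurd h h00
      · rcases hce.2 with ⟨a', he', -⟩ | ⟨b', he', -⟩ <;> simp [eA, eB, eS] at he'
  -- ### Case e = eG d
  · constructor
    · -- always internally passive
      intro hact
      exfalso
      obtain ⟨z₁, z₂, hz⟩ := sym2_exists (P.ends d)
      have hends : P.endsB (P.eG d) =
          s(P.liftW (P.liftV z₁), P.liftW (P.liftV z₂)) := endsB_eG hz
      have hlex : ∀ f : P.EB, f = P.e00 ∨ (∃ a, f = P.eA a) ∨ (∃ b, f = P.eB b) →
          ord.lt f (P.eG d) := by
        rintro f (rfl | ⟨a, rfl⟩ | ⟨b, rfl⟩)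
        · exact hord _ _ (lexEnds_lt_eG lexEnds_e00 bot_le d)
        · exact hord _ _ (lexEnds_lt_eG (lexEnds_eA a) bot_le d)
        · exact hord _ _ (lexEnds_lt_eG (lexEnds_eB b) le_rfl d)
      rcases side_total hT heT hends (⊥ : P.W) with h0 | h0 <;>
        rcases side_total hT heT hends (P.liftW (⊥ : P.Vred)) with hob | hob
      · -- 0 ~ z₁, 0̄ ~ z₁ : use an edge to z₂
        rcases vg_cases z₂ with ⟨a2, rfl⟩ | ⟨b2, rfl⟩
        · exact hact.2 ⟨P.eA a2, hlex _ (Or.inr (Or.inl ⟨a2, rfl⟩)),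
            exchange_spanning hT heT hends (endsB_eA a2) h0 (reachable_refl _ _)⟩
        · exact hact.2 ⟨P.eB b2, hlex _ (Or.inr (Or.inr ⟨b2, rfl⟩)),
            exchange_spanning hT heT hends (endsB_eB b2) hob (reachable_refl _ _)⟩
      · -- 0 ~ z₁, 0̄ ~ z₂ : use 00̄
        exact hact.2 ⟨P.e00, hlex _ (Or.inl rfl),
          exchange_spanning hT heT hends endsB_e00 h0 hob⟩
      · -- 0 ~ z₂, 0̄ ~ z₁ : use 00̄ reversed
        exact hact.2 ⟨P.e00, hlex _ (Or.inl rfl),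
          exchange_spanning hT heT hends (by rw [endsB_e00, Sym2.eq_swap]) hob h0⟩
      · -- 0 ~ z₂, 0̄ ~ z₂ : use an edge to z₁
        rcases vg_cases z₁ with ⟨a1, rfl⟩ | ⟨b1, rfl⟩
        · exact hact.2 ⟨P.eA a1, hlex _ (Or.inr (Or.inl ⟨a1, rfl⟩)),
            exchange_spanning hT heT hends (by rw [endsB_eA a1, Sym2.eq_swap])
              (reachable_refl _ _) h0⟩
        · exact hact.2 ⟨P.eB b1, hlex _ (Or.inr (Or.inr ⟨b1, rfl⟩)),
            exchange_spanning hT heT hends (by rw [endsB_eB b1, Sym2.eq_swap])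
              (reachable_refl _ _) hob⟩
    · rintro (h | ⟨v', hce, -⟩)
      · exact absurd h h00
      · rcases hce.2 with ⟨a', he', -⟩ | ⟨b', he', -⟩ <;> simp [eA, eB, eG] at he'


end

end BiconedPaper
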